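/- Let P be a finite p-group of maximal class of order pⁿ with n ≥ 4 and p odd. Then the subgroups P₁ = C_P(K₂(P)/K₄(P)) and P₂ = C_P(Z₂(P)) are maximal (index p) characteristic subgroups of P. -/

import Mathlib

/-- `C_P(A/B)`: the subgroup of elements of `P` acting trivially on the section `A/B`,
for `B` a normal subgroup of `P`. -/
def sectionCentralizer {P : Type*} [Group P] (A B : Subgroup P) [B.Normal] : Subgroup P :=
  (Subgroup.centralizer ((A.map (QuotientGroup.mk' B) : Subgroup (P ⧸ B)) : Set (P ⧸ B))).comap
    (QuotientGroup.mk' B)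

open scoped commutatorElement

section helpers

variable {G : Type*} [Group G]

lemma comm_mul_left' (a b c : G) : ⁅a * b, c⁆ = a * ⁅b, c⁆ * a⁻¹ * ⁅a, c⁆ := by
  simp only [commutatorElement_def]; group

lemma comm_swap_mem {B : Subgroup G} (g a : G) : ⁅g, a⁆ ∈ B ↔ ⁅a, g⁆ ∈ B := by
  constructor <;> intro h <;> · rw [← commutatorElement_inv]; exact inv_mem h

lemma comm_mem_iff {B : Subgroup G} [B.Normal] (g a : G) :
    ⁅g, a⁆ ∈ B ↔ QuotientGroup.mk' B a * QuotientGroup.mk' B g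
      = QuotientGroup.mk' B g * QuotientGroup.mk' B a := by
  rw [comm_swap_mem, ← commutatorElement_eq_one_iff_mul_comm, ← map_commutatorElement,
    QuotientGroup.mk'_apply, QuotientGroup.eq_one_iff]

lemma mem_sectionCentralizer_iff {A B : Subgroup G} [B.Normal] {g : G} :
    g ∈ sectionCentralizer A B ↔ ∀ a ∈ A, ⁅g, a⁆ ∈ B := by
  simp only [sectionCentralizer, Subgroup.mem_comap, Subgroup.mem_centralizer_iff]
  constructor
  · intro h a ha
    rw [comm_mem_iff]
    exact h _ ⟨a, ha, rfl⟩
  · rintro h x ⟨a, ha, rfl⟩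
    rw [QuotientGroup.mk'_apply, ← QuotientGroup.mk'_apply, ← comm_mem_iff]
    exact h a ha

lemma lcs_strict [Group.IsNilpotent G] {i : ℕ}
    (h : i < Group.nilpotencyClass G) :
    (⊤ : Subgroup G).lowerCentralSeries (i + 1) < (⊤ : Subgroup G).lowerCentralSeries i := by
  refine lt_of_le_of_ne (lowerCentralSeries_antitone _ (Nat.le_succ i)) ?_
  intro he
  have key : ∀ j, (⊤ : Subgroup G).lowerCentralSeries (i + j) = (⊤ : Subgroup G).lowerCentralSeries i := by
    intro j
    induction j with
    | zero => rfl
    | succ j ih =>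
      rw [← Nat.add_assoc, lowerCentralSeries_succ, ih, ← lowerCentralSeries_succ]
      exact he
  have hb : (⊤ : Subgroup G).lowerCentralSeries i = ⊥ := by
    have h2 := key (Group.nilpotencyClass G - i)
    rw [Nat.add_sub_cancel' h.le] at h2
    rw [← h2, lowerCentralSeries_nilpotencyClass]
  exact absurd (lowerCentralSeries_eq_bot_iff_nilpotencyClass_le.mp hb) (not_le.mpr h)

lemma ucs_strict [Group.IsNilpotent G] {i : ℕ}
    (h : i < Group.nilpotencyClass G) :
    Subgroup.upperCentralSeries G i < Subgroup.upperCentralSeries G (i + 1) := by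
  refine lt_of_le_of_ne (upperCentralSeries_mono G (Nat.le_succ i)) ?_
  intro he
  have key : ∀ j, Subgroup.upperCentralSeries G (i + j) = Subgroup.upperCentralSeries G i := by
    intro j
    induction j with
    | zero => rfl
    | succ j ih =>
      ext x
      rw [← Nat.add_assoc, mem_upperCentralSeries_succ_iff]
      conv_rhs => rw [he, mem_upperCentralSeries_succ_iff]
      simp [ih]
  have hb : Subgroup.upperCentralSeries G i = ⊤ := by
    have h2 := key (Group.nilpotencyClass G - i)
    rw [Nat.add_sub_cancel' h.le] at h2
    rw [← h2, upperCentralSeries_nilpotencyClass]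
  exact absurd (upperCentralSeries_eq_top_iff_nilpotencyClass_le.mp hb) (not_le.mpr h)

lemma chain_exp (e : ℕ → ℕ) (m : ℕ) (hdec : ∀ i < m, e (i + 1) < e i) (h0 : e 0 ≤ m)
    (_hm : e m = 0) : ∀ i ≤ m, e i = m - i := by
  have upper : ∀ i ≤ m, e i + i ≤ m := by
    intro i
    induction i with
    | zero => simpa
    | succ i ih =>
      intro h
      have h1 := hdec i (by omega)
      have h2 := ih (by omega)
      omega
  have lower : ∀ k ≤ m, k ≤ e (m - k) := by
    intro k
    induction k with
    | zero => omega
    | succ k ih =>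
      intro h
      have h1 := ih (by omega)
      have h2 := hdec (m - (k + 1)) (by omega)
      have h3 : m - (k + 1) + 1 = m - k := by omega
      rw [h3] at h2
      omega
  intro i hi
  have h1 := upper i hi
  have h2 := lower (m - i) (by omega)
  have h3 : m - (m - i) = i := by omega
  rw [h3] at h2
  omega

lemma card_map_mk' [Finite G] {N H : Subgroup G} [N.Normal] (h : N ≤ H)
    {a b : ℕ} (hH : Nat.card H = a * b) (hN : Nat.card N = a) (ha : 0 < a) :
    Nat.card (H.map (QuotientGroup.mk' N)) = b := by
  have h1 : (QuotientGroup.mk' N).ker.relIndex H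
      = Nat.card (H.map (QuotientGroup.mk' N)) := Subgroup.relIndex_ker (K := H) _
  rw [QuotientGroup.ker_mk'] at h1
  have h2 : Nat.card (N.subgroupOf H) = a := by
    rw [Nat.card_congr (Subgroup.subgroupOfEquivOfLe h).toEquiv, hN]
  have h3 := Subgroup.card_mul_index (N.subgroupOf H)
  rw [h2, hH] at h3
  have h5 : (N.subgroupOf H).index = b := Nat.eq_of_mul_eq_mul_left ha h3
  have h4 : N.relIndex H = (N.subgroupOf H).index := rfl
  rw [← h1, h4, h5]

lemma decomp [Finite G] (p : ℕ) [Fact p.Prime] {N H : Subgroup G} [N.Normal]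
    (hcard : Nat.card (H.map (QuotientGroup.mk' N)) = p)
    {k : G} (hk : k ∈ H) (hk2 : k ∉ N) :
    ∀ a ∈ H, ∃ (m : ℤ) (t : G), t ∈ N ∧ a = k ^ m * t := by
  set π := QuotientGroup.mk' N with hπ
  have hk1 : π k ≠ 1 := by
    rw [hπ, QuotientGroup.mk'_apply, Ne, QuotientGroup.eq_one_iff]
    exact hk2
  have hmem : π k ∈ H.map π := ⟨k, hk, rfl⟩
  have hle : Subgroup.zpowers (π k) ≤ H.map π := Subgroup.zpowers_le.mpr hmem
  have hz : Subgroup.zpowers (π k) = H.map π := by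
    apply Subgroup.eq_of_le_of_card_ge hle
    rw [hcard, Nat.card_zpowers]
    have hdvd : orderOf (π k) ∣ p := by
      rw [← hcard, ← Nat.card_zpowers]
      exact Subgroup.card_dvd_of_le hle
    rcases (Nat.Prime.eq_one_or_self_of_dvd Fact.out _ hdvd) with h | h
    · exact absurd (orderOf_eq_one_iff.mp h) hk1
    · exact le_of_eq h.symm
  intro a ha
  have hmem2 : π a ∈ Subgroup.zpowers (π k) := hz ▸ ⟨a, ha, rfl⟩
  obtain ⟨m, hm⟩ := Subgroup.mem_zpowers_iff.mp hmem2
  refine ⟨m, (k ^ m)⁻¹ * a, ?_, by group⟩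
  have hone : π ((k ^ m)⁻¹ * a) = 1 := by
    rw [map_mul, map_inv, map_zpow, hm]
    group
  rwa [hπ, QuotientGroup.mk'_apply, QuotientGroup.eq_one_iff] at hone

lemma cards_lemma (p n : ℕ) [Fact p.Prime] (P : Type*) [Group P] [Finite P]
    (hP : IsPGroup p P) [Group.IsNilpotent P]
    (hcard : Nat.card P = p ^ n) (hclass : Group.nilpotencyClass P = n - 1) (hn : 4 ≤ n) :
    Nat.card ((⊤ : Subgroup P).lowerCentralSeries 1) = p ^ (n - 2) ∧
    Nat.card ((⊤ : Subgroup P).lowerCentralSeries 2) = p ^ (n - 3) ∧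
    Nat.card ((⊤ : Subgroup P).lowerCentralSeries 3) = p ^ (n - 4) ∧
    Nat.card (Subgroup.upperCentralSeries P 1) = p ^ 1 ∧
    Nat.card (Subgroup.upperCentralSeries P 2) = p ^ 2 := by
  have hp : p.Prime := Fact.out
  have hE : ∀ H : Subgroup P, Nat.card H = p ^ ((Nat.card H).factorization p) := by
    intro H
    obtain ⟨k, hk⟩ := (IsPGroup.iff_card (p := p) (G := H)).mp (hP.to_subgroup H)
    rw [hk, hp.factorization_pow, Finsupp.single_eq_same]
  set E : Subgroup P → ℕ := fun H => (Nat.card H).factorization p with hEdef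
  have hcardlt : ∀ {H K : Subgroup P}, H < K → Nat.card H < Nat.card K := by
    intro H K hlt
    rcases lt_or_eq_of_le (Subgroup.card_le_of_le hlt.le) with h | h
    · exact h
    · exact absurd (Subgroup.eq_of_le_of_card_ge hlt.le h.ge) hlt.ne
  have hlt : ∀ {H K : Subgroup P}, H < K → E H < E K := by
    intro H K h
    have h2 := hcardlt h
    rw [hE H, hE K] at h2
    exact (Nat.pow_lt_pow_iff_right hp.one_lt).mp h2
  have hEtop : E ⊤ = n := by
    have h2 : Nat.card (⊤ : Subgroup P) = p ^ n := by rw [Subgroup.card_top, hcard]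
    rw [hEdef]; simp only [h2, hp.factorization_pow, Finsupp.single_eq_same]
  have hEbot : E ⊥ = 0 := by
    rw [hEdef]; simp [Subgroup.card_bot]
  -- fact (a) : E (lcs 1) ≤ n - 2
  have hfacta : E ((⊤ : Subgroup P).lowerCentralSeries 1) ≤ n - 2 := by
    have hlt1 : E ((⊤ : Subgroup P).lowerCentralSeries 1) < n := by
      have h2 := hlt (lcs_strict (i := 0) (by omega))
      rwa [lowerCentralSeries_zero, hEtop] at h2
    by_contra hc
    have hEeq : E ((⊤ : Subgroup P).lowerCentralSeries 1) = n - 1 := by omega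
    have hidx : ((⊤ : Subgroup P).lowerCentralSeries 1).index = p := by
      have h3 := Subgroup.card_mul_index ((⊤ : Subgroup P).lowerCentralSeries 1)
      have hEeq' : (Nat.card ((⊤ : Subgroup P).lowerCentralSeries 1)).factorization p = n - 1 := hEeq
      rw [hE ((⊤ : Subgroup P).lowerCentralSeries 1), hEeq', hcard] at h3
      have h4 : p ^ n = p ^ (n - 1) * p := by
        rw [← pow_succ]; congr 1; omega
      rw [h4] at h3
      exact Nat.eq_of_mul_eq_mul_left (pow_pos hp.pos _) h3
    have hcyc : IsCyclic (P ⧸ (⊤ : Subgroup P).lowerCentralSeries 1) :=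
      isCyclic_of_prime_card (p := p) (by rw [← hidx]; rfl)
    have hle12 : (⊤ : Subgroup P).lowerCentralSeries 2 ≤ ((⊤ : Subgroup P).lowerCentralSeries 1).comap (MonoidHom.id P) := by
      rw [Subgroup.comap_id]
      exact lowerCentralSeries_antitone _ (Nat.le_succ 1)
    set f : P ⧸ (⊤ : Subgroup P).lowerCentralSeries 2 →* P ⧸ (⊤ : Subgroup P).lowerCentralSeries 1 :=
      QuotientGroup.map _ _ (MonoidHom.id P) hle12 with hf
    have hker : f.ker ≤ Subgroup.center (P ⧸ (⊤ : Subgroup P).lowerCentralSeries 2) := by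
      intro q hq
      obtain ⟨x, rfl⟩ := QuotientGroup.mk'_surjective _ q
      have hx : x ∈ (⊤ : Subgroup P).lowerCentralSeries 1 := by
        have h5 : f (QuotientGroup.mk' _ x) = 1 := hq
        rw [hf, QuotientGroup.mk'_apply, QuotientGroup.map_mk, MonoidHom.id_apply,
          QuotientGroup.eq_one_iff] at h5
        exact h5
      rw [Subgroup.mem_center_iff]
      intro g
      obtain ⟨y, rfl⟩ := QuotientGroup.mk'_surjective _ g
      have h6 : ⁅x, y⁆ ∈ (⊤ : Subgroup P).lowerCentralSeries 2 := by
        rw [show (2 : ℕ) = 1 + 1 from rfl, lowerCentralSeries_succ]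
        exact Subgroup.commutator_mem_commutator hx (Subgroup.mem_top y)
      exact (comm_mem_iff x y).mp h6
    have hcomm := commutative_of_cyclic_center_quotient f hker
    have h12 : (⊤ : Subgroup P).lowerCentralSeries 1 ≤ (⊤ : Subgroup P).lowerCentralSeries 2 := by
      rw [lowerCentralSeries_one, commutator_def, Subgroup.commutator_le]
      intro g _ h _
      rw [comm_mem_iff]
      exact (hcomm _ _).symm
    exact absurd h12 (lcs_strict (G := P) (i := 1) (by omega)).not_ge
  -- fact (b) : E (ucs (n-2)) ≤ n - 2
  have hfactb : E (Subgroup.upperCentralSeries P (n - 2)) ≤ n - 2 := by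
    have hnetop : Subgroup.upperCentralSeries P (n - 2) ≠ ⊤ := by
      intro h
      have := upperCentralSeries_eq_top_iff_nilpotencyClass_le.mp h
      omega
    have hlt1 : E (Subgroup.upperCentralSeries P (n - 2)) < n := by
      have h2 := hlt (lt_of_le_of_ne le_top hnetop)
      rwa [hEtop] at h2
    by_contra hc
    have hEeq : E (Subgroup.upperCentralSeries P (n - 2)) = n - 1 := by omega
    have hidx : (Subgroup.upperCentralSeries P (n - 2)).index = p := by
      have h3 := Subgroup.card_mul_index (Subgroup.upperCentralSeries P (n - 2))
      have hEeq' : (Nat.card (Subgroup.upperCentralSeries P (n - 2))).factorization p = n - 1 := hEeq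
      rw [hE (Subgroup.upperCentralSeries P (n - 2)), hEeq', hcard] at h3
      have h4 : p ^ n = p ^ (n - 1) * p := by
        rw [← pow_succ]; congr 1; omega
      rw [h4] at h3
      exact Nat.eq_of_mul_eq_mul_left (pow_pos hp.pos _) h3
    have hcyc : IsCyclic (P ⧸ Subgroup.upperCentralSeries P (n - 2)) :=
      isCyclic_of_prime_card (p := p) (by rw [← hidx]; rfl)
    have hle12 : Subgroup.upperCentralSeries P (n - 3)
        ≤ (Subgroup.upperCentralSeries P (n - 2)).comap (MonoidHom.id P) := by
      rw [Subgroup.comap_id]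
      exact upperCentralSeries_mono P (by omega)
    set f : P ⧸ Subgroup.upperCentralSeries P (n - 3) →* P ⧸ Subgroup.upperCentralSeries P (n - 2) :=
      QuotientGroup.map _ _ (MonoidHom.id P) hle12 with hf
    have hker : f.ker ≤ Subgroup.center (P ⧸ Subgroup.upperCentralSeries P (n - 3)) := by
      intro q hq
      obtain ⟨x, rfl⟩ := QuotientGroup.mk'_surjective _ q
      have hx : x ∈ Subgroup.upperCentralSeries P (n - 2) := by
        have h5 : f (QuotientGroup.mk' _ x) = 1 := hq
        rw [hf, QuotientGroup.mk'_apply, QuotientGroup.map_mk, MonoidHom.id_apply,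
          QuotientGroup.eq_one_iff] at h5
        exact h5
      rw [Subgroup.mem_center_iff]
      intro g
      obtain ⟨y, rfl⟩ := QuotientGroup.mk'_surjective _ g
      have hx' : x ∈ Subgroup.upperCentralSeries P ((n - 3) + 1) := by
        rw [show n - 3 + 1 = n - 2 by omega]
        exact hx
      have h6 : ⁅x, y⁆ ∈ Subgroup.upperCentralSeries P (n - 3) := by
        have := (mem_upperCentralSeries_succ_iff).mp hx' y
        exact this
      exact (comm_mem_iff x y).mp h6
    have hcomm := commutative_of_cyclic_center_quotient f hker
    have h12 : Subgroup.upperCentralSeries P (n - 2) = ⊤ := by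
      rw [eq_top_iff]
      intro x _
      rw [show n - 2 = (n - 3) + 1 by omega, mem_upperCentralSeries_succ_iff]
      intro y
      rw [comm_mem_iff]
      exact (hcomm _ _).symm
    exact hnetop h12
  -- lower central series cards
  have hLCS : ∀ i ≤ n - 2, E ((⊤ : Subgroup P).lowerCentralSeries (i + 1)) = n - 2 - i := by
    refine chain_exp (fun i => E ((⊤ : Subgroup P).lowerCentralSeries (i + 1))) (n - 2) ?_ ?_ ?_
    · intro i hi
      exact hlt (lcs_strict (i := i + 1) (by omega))
    · simpa using hfacta
    · show E ((⊤ : Subgroup P).lowerCentralSeries (n - 2 + 1)) = 0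
      have h2 : (⊤ : Subgroup P).lowerCentralSeries (n - 2 + 1) = ⊥ := by
        rw [show n - 2 + 1 = n - 1 by omega, ← hclass, lowerCentralSeries_nilpotencyClass]
      rw [h2, hEbot]
  -- upper central series cards
  have hUCS : ∀ j ≤ n - 2, E (Subgroup.upperCentralSeries P (n - 2 - j)) = n - 2 - j := by
    refine chain_exp (fun j => E (Subgroup.upperCentralSeries P (n - 2 - j))) (n - 2) ?_ ?_ ?_
    · intro j hj
      have h2 : n - 2 - (j + 1) + 1 = n - 2 - j := by omega
      have h3 := ucs_strict (G := P) (i := n - 2 - (j + 1)) (by omega)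
      rw [h2] at h3
      exact hlt h3
    · simpa using hfactb
    · show E (Subgroup.upperCentralSeries P (n - 2 - (n - 2))) = 0
      rw [show n - 2 - (n - 2) = 0 by omega, upperCentralSeries_zero, hEbot]
  have hval : ∀ (H : Subgroup P) (m : ℕ), E H = m → Nat.card H = p ^ m := by
    intro H m hm
    have hm' : (Nat.card H).factorization p = m := hm
    rw [hE H, hm']
  have c1 : Nat.card ((⊤ : Subgroup P).lowerCentralSeries 1) = p ^ (n - 2) := by
    have h2 := hLCS 0 (by omega)
    norm_num at h2
    exact hval _ _ h2
  have c2 : Nat.card ((⊤ : Subgroup P).lowerCentralSeries 2) = p ^ (n - 3) := by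
    have h2 := hLCS 1 (by omega)
    norm_num [-Subgroup.lowerCentralSeries_succ] at h2
    rw [hval _ _ h2]
    congr 1 <;> omega
  have c3 : Nat.card ((⊤ : Subgroup P).lowerCentralSeries 3) = p ^ (n - 4) := by
    have h2 := hLCS 2 (by omega)
    norm_num [-Subgroup.lowerCentralSeries_succ] at h2
    rw [hval _ _ h2]
    congr 1 <;> omega
  have z1 : Nat.card (Subgroup.upperCentralSeries P 1) = p ^ 1 := by
    have h2 := hUCS (n - 3) (by omega)
    rw [show n - 2 - (n - 3) = 1 by omega] at h2
    exact hval _ _ h2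
  have z2 : Nat.card (Subgroup.upperCentralSeries P 2) = p ^ 2 := by
    have h2 := hUCS (n - 4) (by omega)
    rw [show n - 2 - (n - 4) = 2 by omega] at h2
    exact hval _ _ h2
  exact ⟨c1, c2, c3, z1, z2⟩

end helpers

/-- Let `P` be a `p`-group of maximal class of order `pⁿ`, `n ≥ 4`, `p` odd. Then
`P₁ = C_P(K₂(P)/K₄(P))` and `P₂ = C_P(Z₂(P))` are characteristic subgroups of index `p`.
Here `K_{i}(P) = (⊤ : Subgroup P).lowerCentralSeries (i-1)`. -/
theorem stmt18 (p n : ℕ) [Fact p.Prime] (hodd : Odd p) (P : Type*) [Group P] [Finite P]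
    (hP : IsPGroup p P) [Group.IsNilpotent P]
    (hcard : Nat.card P = p ^ n) (hclass : Group.nilpotencyClass P = n - 1) (hn : 4 ≤ n) :
    (sectionCentralizer ((⊤ : Subgroup P).lowerCentralSeries 1) ((⊤ : Subgroup P).lowerCentralSeries 3)).index = p ∧
    (sectionCentralizer ((⊤ : Subgroup P).lowerCentralSeries 1) ((⊤ : Subgroup P).lowerCentralSeries 3)).Characteristic ∧
    (Subgroup.centralizer (Subgroup.upperCentralSeries P 2 : Set P)).index = p ∧
    (Subgroup.centralizer (Subgroup.upperCentralSeries P 2 : Set P)).Characteristic := by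
  have hp : p.Prime := Fact.out
  obtain ⟨c1, c2, c3, z1, z2⟩ := cards_lemma p n P hP hcard hclass hn
  -- ### Part 1
  have hK21 : (⊤ : Subgroup P).lowerCentralSeries 2 ≤ (⊤ : Subgroup P).lowerCentralSeries 1 :=
    lowerCentralSeries_antitone _ (Nat.le_succ 1)
  have hK32 : (⊤ : Subgroup P).lowerCentralSeries 3 ≤ (⊤ : Subgroup P).lowerCentralSeries 2 :=
    lowerCentralSeries_antitone _ (Nat.le_succ 2)
  obtain ⟨k, hk1, hk2⟩ := SetLike.exists_of_lt (lcs_strict (G := P) (i := 1) (by omega))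
  set mk3 := QuotientGroup.mk' ((⊤ : Subgroup P).lowerCentralSeries 3) with hmk3
  have hcent2 : ∀ t ∈ (⊤ : Subgroup P).lowerCentralSeries 2, ∀ x : P ⧸ (⊤ : Subgroup P).lowerCentralSeries 3,
      Commute x (mk3 t) := by
    intro t ht x
    obtain ⟨g, rfl⟩ := QuotientGroup.mk'_surjective _ x
    apply commutatorElement_eq_one_iff_commute.mp
    rw [← map_commutatorElement, QuotientGroup.mk'_apply, QuotientGroup.eq_one_iff]
    rw [comm_swap_mem]
    rw [show (3 : ℕ) = 2 + 1 from rfl, lowerCentralSeries_succ]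
    exact Subgroup.commutator_mem_commutator ht (Subgroup.mem_top g)
  have hcomk : ∀ g : P, ⁅g, k⁆ ∈ (⊤ : Subgroup P).lowerCentralSeries 2 := by
    intro g
    rw [comm_swap_mem]
    rw [show (2 : ℕ) = 1 + 1 from rfl, lowerCentralSeries_succ]
    exact Subgroup.commutator_mem_commutator hk1 (Subgroup.mem_top g)
  set f : P →* P ⧸ (⊤ : Subgroup P).lowerCentralSeries 3 :=
    { toFun := fun g => ⁅mk3 g, mk3 k⁆
      map_one' := by rw [map_one, commutatorElement_one_left]
      map_mul' := by
        intro a b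
        rw [map_mul, comm_mul_left']
        have hc1 : Commute (mk3 a) ⁅mk3 b, mk3 k⁆ := by
          have h0 := hcent2 _ (hcomk b) (mk3 a)
          rwa [map_commutatorElement] at h0
        have hc2 : Commute ⁅mk3 a, mk3 k⁆ ⁅mk3 b, mk3 k⁆ := by
          have h0 := hcent2 _ (hcomk b) ⁅mk3 a, mk3 k⁆
          rwa [map_commutatorElement] at h0
        rw [hc1.eq, hc2.eq]
        group } with hfdef
  have hcard12 :
      Nat.card (((⊤ : Subgroup P).lowerCentralSeries 1).map (QuotientGroup.mk' ((⊤ : Subgroup P).lowerCentralSeries 2))) = p := by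
    apply card_map_mk' hK21 (a := p ^ (n - 3)) (b := p) _ c2 (pow_pos hp.pos _)
    rw [c1, ← pow_succ]
    congr 1
    omega
  have hdecomp := decomp p hcard12 hk1 hk2
  have hkey : ∀ g : P, ⁅mk3 g, mk3 k⁆ = 1 →
      ∀ a ∈ (⊤ : Subgroup P).lowerCentralSeries 1, ⁅g, a⁆ ∈ (⊤ : Subgroup P).lowerCentralSeries 3 := by
    intro g hg a ha
    obtain ⟨m, t, ht, rfl⟩ := hdecomp a ha
    have h1 : Commute (mk3 g) (mk3 k) := commutatorElement_eq_one_iff_commute.mp hg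
    have h2 : Commute (mk3 g) (mk3 t) := hcent2 t ht (mk3 g)
    have h3 : Commute (mk3 g) (mk3 (k ^ m * t)) := by
      rw [map_mul, map_zpow]
      exact (h1.zpow_right m).mul_right h2
    have h4 := commutatorElement_eq_one_iff_commute.mpr h3
    rw [← map_commutatorElement] at h4
    rwa [hmk3, QuotientGroup.mk'_apply, QuotientGroup.eq_one_iff] at h4
  have hkerf : f.ker = sectionCentralizer ((⊤ : Subgroup P).lowerCentralSeries 1) ((⊤ : Subgroup P).lowerCentralSeries 3) := by
    ext g
    rw [MonoidHom.mem_ker, mem_sectionCentralizer_iff]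
    constructor
    · intro hg
      exact hkey g hg
    · intro h
      show ⁅mk3 g, mk3 k⁆ = 1
      rw [← map_commutatorElement, hmk3, QuotientGroup.mk'_apply, QuotientGroup.eq_one_iff]
      exact h k hk1
  have hrange : f.range ≤ ((⊤ : Subgroup P).lowerCentralSeries 2).map mk3 := by
    rintro x ⟨g, rfl⟩
    exact ⟨⁅g, k⁆, hcomk g, map_commutatorElement mk3 g k⟩
  have hcard23 : Nat.card (((⊤ : Subgroup P).lowerCentralSeries 2).map mk3) = p := by
    apply card_map_mk' hK32 (a := p ^ (n - 4)) (b := p) _ c3 (pow_pos hp.pos _)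
    rw [c2, ← pow_succ]
    congr 1
    omega
  have hdvd : Nat.card f.range ∣ p := by
    rw [← hcard23]
    exact Subgroup.card_dvd_of_le hrange
  have hne : Nat.card f.range ≠ 1 := by
    intro h1
    have hbot : f.range = ⊥ := Subgroup.card_eq_one.mp h1
    have hallker : ∀ g : P, ⁅mk3 g, mk3 k⁆ = 1 := by
      intro g
      have h2 : f g ∈ f.range := ⟨g, rfl⟩
      rw [hbot, Subgroup.mem_bot] at h2
      exact h2
    have h23 : (⊤ : Subgroup P).lowerCentralSeries 2 ≤ (⊤ : Subgroup P).lowerCentralSeries 3 := by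
      rw [show (2 : ℕ) = 1 + 1 from rfl, lowerCentralSeries_succ]
      refine Subgroup.commutator_le.mpr fun a ha g _ => ?_
      rw [comm_swap_mem]
      exact hkey g (hallker g) a ha
    exact absurd h23 (lcs_strict (G := P) (i := 2) (by omega)).not_ge
  have hrangep : Nat.card f.range = p :=
    (Nat.Prime.eq_one_or_self_of_dvd hp _ hdvd).resolve_left hne
  have goal1 : (sectionCentralizer ((⊤ : Subgroup P).lowerCentralSeries 1) ((⊤ : Subgroup P).lowerCentralSeries 3)).index = p := by
    rw [← hkerf, Subgroup.index_ker, hrangep]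
  have goal2 :
      (sectionCentralizer ((⊤ : Subgroup P).lowerCentralSeries 1) ((⊤ : Subgroup P).lowerCentralSeries 3)).Characteristic := by
    rw [Subgroup.characteristic_iff_le_comap]
    intro phi g hg
    rw [Subgroup.mem_comap]
    rw [mem_sectionCentralizer_iff] at hg ⊢
    intro a ha
    have hb : phi.symm a ∈ (⊤ : Subgroup P).lowerCentralSeries 1 :=
      lowerCentralSeries.map phi.symm.toMonoidHom 1 (Subgroup.mem_map.mpr ⟨a, ha, rfl⟩)
    have h2 := hg _ hb
    have h3 : ⁅phi.toMonoidHom g, a⁆ = phi.toMonoidHom ⁅g, phi.symm a⁆ := by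
      rw [map_commutatorElement]
      simp
    rw [h3]
    exact lowerCentralSeries.map phi.toMonoidHom 3 (Subgroup.mem_map.mpr ⟨_, h2, rfl⟩)
  -- ### Part 2
  have hZ1c : Subgroup.upperCentralSeries P 1 = Subgroup.center P := upperCentralSeries_one P
  have hZ12 : Subgroup.upperCentralSeries P 1 ≤ Subgroup.upperCentralSeries P 2 :=
    upperCentralSeries_mono P (Nat.le_succ 1)
  obtain ⟨z, hz2, hz1⟩ := SetLike.exists_of_lt (ucs_strict (G := P) (i := 1) (by omega))
  have hZcomm : ∀ x ∈ Subgroup.upperCentralSeries P 2, ∀ y : P, ⁅x, y⁆ ∈ Subgroup.center P := by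
    intro x hx y
    have h0 := (mem_upperCentralSeries_succ_iff (n := 1)).mp hx y
    rw [upperCentralSeries_one] at h0
    exact h0
  have hZcomm' : ∀ y : P, ⁅y, z⁆ ∈ Subgroup.center P := by
    intro y
    rw [comm_swap_mem]
    exact hZcomm z hz2 y
  set f2 : P →* P :=
    { toFun := fun g => ⁅g, z⁆
      map_one' := by simp
      map_mul' := by
        intro a b
        rw [comm_mul_left']
        have hc := Subgroup.mem_center_iff.mp (hZcomm' b)
        rw [hc a, hc ⁅a, z⁆]
        group } with hf2def
  have hcardZ :
      Nat.card ((Subgroup.upperCentralSeries P 2).map (QuotientGroup.mk' (Subgroup.upperCentralSeries P 1))) = p := by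
    apply card_map_mk' hZ12 (a := p ^ 1) (b := p) _ z1 (pow_pos hp.pos _)
    rw [z2, ← pow_succ]
  have hdecompZ := decomp p hcardZ hz2 hz1
  have hker2 : f2.ker = Subgroup.centralizer (Subgroup.upperCentralSeries P 2 : Set P) := by
    ext g
    rw [MonoidHom.mem_ker]
    constructor
    · intro hg
      rw [Subgroup.mem_centralizer_iff]
      intro h hh
      obtain ⟨m, t, ht, rfl⟩ := hdecompZ h hh
      have hcg : Commute g z := commutatorElement_eq_one_iff_commute.mp hg
      have hct : Commute g t := Subgroup.mem_center_iff.mp (hZ1c ▸ ht) g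
      exact ((hcg.zpow_right m).mul_right hct).eq.symm
    · intro hg
      have h0 := Subgroup.mem_centralizer_iff.mp hg z hz2
      exact commutatorElement_eq_one_iff_mul_comm.mpr h0.symm
  have hcardcen : Nat.card (Subgroup.center P) = p := by
    rw [← hZ1c, z1, pow_one]
  have hrange2 : f2.range ≤ Subgroup.center P := by
    rintro x ⟨g, rfl⟩
    exact hZcomm' g
  have hdvd2 : Nat.card f2.range ∣ p := by
    rw [← hcardcen]
    exact Subgroup.card_dvd_of_le hrange2
  have hne2 : Nat.card f2.range ≠ 1 := by
    intro h1
    have hbot : f2.range = ⊥ := Subgroup.card_eq_one.mp h1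
    have hzc : z ∈ Subgroup.center P := by
      rw [Subgroup.mem_center_iff]
      intro g
      have h2 : f2 g ∈ f2.range := ⟨g, rfl⟩
      rw [hbot, Subgroup.mem_bot] at h2
      exact commutatorElement_eq_one_iff_mul_comm.mp h2
    rw [← hZ1c] at hzc
    exact hz1 hzc
  have hrangep2 : Nat.card f2.range = p :=
    (Nat.Prime.eq_one_or_self_of_dvd hp _ hdvd2).resolve_left hne2
  have goal3 : (Subgroup.centralizer (Subgroup.upperCentralSeries P 2 : Set P)).index = p := by
    rw [← hker2, Subgroup.index_ker, hrangep2]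
  haveI hchar2 : (Subgroup.upperCentralSeries P 2).Characteristic :=
    Subgroup.characteristic_iff_comap_eq.mpr fun phi => comap_upperCentralSeries phi 2
  exact ⟨goal1, goal2, goal3, inferInstance⟩
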